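/- Let V be a positive integer and let X be a random variable taking values in a finite set Ω of cardinality V with distribution D (so D(x) = P[X = x]). If the Shannon entropy with base-2 logarithms satisfies H(X) ≥ log₂ V − 1/18, then the set W_X = { x ∈ Ω : D(x) ≥ 1/(2V) } has cardinality |W_X| ≥ (2/3)·V. -/

import Mathlib

open Finset

/-- Shannon entropy (base-2 logarithms) of a probability mass function on a finite set. -/
noncomputable def shannonEntropy {Ω : Type*} [Fintype Ω] (p : Ω → ℝ) : ℝ :=
  -∑ ω, p ω * Real.logb 2 (p ω)

private lemma aux_mul_log_ge_neg_three_eighths {r : ℝ} (hr : 0 ≤ r) :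
    -(3/8 : ℝ) ≤ r * Real.log r := by
  rcases hr.eq_or_lt with h | h
  · rw [← h]; norm_num
  · have he : (8/3 : ℝ) < Real.exp 1 := by
      have := Real.exp_one_gt_d9
      linarith
    have h1 : Real.log (1/r) ≤ (1/r) / Real.exp 1 := by
      have hx : 0 < (1/r) / Real.exp 1 := by positivity
      have := Real.log_le_sub_one_of_pos hx
      rw [Real.log_div (by positivity) (Real.exp_pos 1).ne', Real.log_exp] at this
      linarith
    have h2 : r * Real.log (1/r) ≤ 1 / Real.exp 1 := by
      calc r * Real.log (1/r) ≤ r * ((1/r) / Real.exp 1) :=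
            mul_le_mul_of_nonneg_left h1 hr
        _ = 1 / Real.exp 1 := by field_simp
    have h3 : 1 / Real.exp 1 ≤ 3/8 := by
      rw [div_le_iff₀ (Real.exp_pos 1)]
      nlinarith [Real.exp_pos 1]
    rw [Real.log_div one_ne_zero h.ne', Real.log_one, zero_sub, mul_neg] at h2
    linarith

open scoped Classical in
theorem stmt_3 {Ω : Type*} [Fintype Ω] (V : ℕ) (hV : 0 < V)
    (hcard : Fintype.card Ω = V)
    (D : Ω → ℝ) (hD0 : ∀ x, 0 ≤ D x) (hD1 : ∑ x, D x = 1)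
    (hH : Real.logb 2 V - 1 / 18 ≤ shannonEntropy D) :
    (2 / 3 : ℝ) * V ≤ ((Finset.univ.filter (fun x : Ω => 1 / (2 * (V : ℝ)) ≤ D x)).card : ℝ) := by
  have hVR : (0:ℝ) < V := by exact_mod_cast hV
  have log2pos : (0:ℝ) < Real.log 2 := Real.log_pos (by norm_num)
  set W : Finset Ω := Finset.univ.filter (fun x : Ω => 1 / (2 * (V : ℝ)) ≤ D x) with hW
  set B : Finset Ω := Finset.univ.filter (fun x : Ω => ¬ (1 / (2 * (V : ℝ)) ≤ D x)) with hB
  have hcardWB : (W.card : ℝ) + B.card = V := by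
    have hnat : W.card + B.card = V := by
      rw [hW, hB, Finset.card_filter_add_card_filter_not, Finset.card_univ, hcard]
    exact_mod_cast hnat
  -- good point bound
  have hgood : ∀ x : Ω, D x - 1/V ≤ D x * Real.log (V * D x) := by
    intro x
    rcases (hD0 x).eq_or_lt with h | h
    · rw [← h]; simp
    · have h1 : 1 - ((V:ℝ) * D x)⁻¹ ≤ Real.log ((V:ℝ) * D x) :=
        Real.one_sub_inv_le_log_of_pos (by positivity)
      have h2 := mul_le_mul_of_nonneg_left h1 (hD0 x)
      have heq : D x * (1 - ((V:ℝ) * D x)⁻¹) = D x - 1/V := by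
        field_simp
      linarith [heq ▸ h2]
  -- bad point bound
  have hbad : ∀ x ∈ B, D x - 1/V + 1/(8*V) ≤ D x * Real.log (V * D x) := by
    intro x hx
    rw [hB, Finset.mem_filter] at hx
    have hlt : D x < 1 / (2 * V) := lt_of_not_ge hx.2
    have hr : 0 ≤ (V:ℝ) * D x := mul_nonneg hVR.le (hD0 x)
    have key : -(3/8 : ℝ) ≤ ((V:ℝ) * D x) * Real.log ((V:ℝ) * D x) :=
      aux_mul_log_ge_neg_three_eighths hr
    have hrle : (V:ℝ) * D x ≤ 1/2 := by
      rw [lt_div_iff₀ (by positivity)] at hlt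
      nlinarith
    have step : (V:ℝ) * (D x - 1/V + 1/(8*V)) ≤ (V:ℝ) * (D x * Real.log ((V:ℝ) * D x)) := by
      have e1 : (V:ℝ) * (D x - 1/V + 1/(8*V)) = (V:ℝ) * D x - 7/8 := by
        field_simp; ring
      have e2 : (V:ℝ) * (D x * Real.log ((V:ℝ) * D x))
          = ((V:ℝ) * D x) * Real.log ((V:ℝ) * D x) := by ring
      rw [e1, e2]
      linarith
    exact (mul_le_mul_iff_right₀ hVR).mp step
  -- rewrite sum of D x * log (V * D x)
  have hsplit : ∑ x, D x * Real.log ((V:ℝ) * D x)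
      = Real.log V + ∑ x, D x * Real.log (D x) := by
    have : ∀ x : Ω, D x * Real.log ((V:ℝ) * D x)
        = D x * Real.log V + D x * Real.log (D x) := by
      intro x
      rcases (hD0 x).eq_or_lt with h | h
      · rw [← h]; simp
      · rw [Real.log_mul (by positivity) h.ne']; ring
    rw [Finset.sum_congr rfl (fun x _ => this x), Finset.sum_add_distrib,
      ← Finset.sum_mul, hD1, one_mul]
  -- entropy bound gives bound on ∑ D log D
  have hent : ∑ x, D x * Real.log (D x) ≤ Real.log 2 / 18 - Real.log V := by
    have hHdef : shannonEntropy D = -∑ x, D x * (Real.log (D x) / Real.log 2) := by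
      simp [shannonEntropy, Real.logb]
    have hlogb : Real.logb 2 (V:ℝ) = Real.log V / Real.log 2 := by
      simp [Real.logb]
    rw [hHdef, hlogb] at hH
    have hsum : ∑ x, D x * (Real.log (D x) / Real.log 2)
        = (∑ x, D x * Real.log (D x)) / Real.log 2 := by
      rw [Finset.sum_div]
      exact Finset.sum_congr rfl fun x _ => by ring
    rw [hsum] at hH
    -- from hH : log V / log 2 - 1/18 ≤ -(S / log 2)
    have h2 : (∑ x, D x * Real.log (D x)) / Real.log 2 ≤ 1/18 - Real.log V / Real.log 2 := by
      linarith
    have h3 := mul_le_mul_of_nonneg_right h2 log2pos.le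
    rw [div_mul_cancel₀ _ log2pos.ne'] at h3
    calc ∑ x, D x * Real.log (D x) ≤ (1/18 - Real.log V / Real.log 2) * Real.log 2 := h3
      _ = Real.log 2 / 18 - Real.log V := by field_simp
  -- combine: lower bound the sum
  have hlower : (B.card : ℝ) / (8*V) ≤ ∑ x, D x * Real.log ((V:ℝ) * D x) := by
    have hsplit2 : ∑ x, D x * Real.log ((V:ℝ) * D x)
        = ∑ x ∈ W, D x * Real.log ((V:ℝ) * D x) + ∑ x ∈ B, D x * Real.log ((V:ℝ) * D x) := by
      rw [hW, hB]
      exact (Finset.sum_filter_add_sum_filter_not _ _ _).symm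
    have hWle : ∑ x ∈ W, (D x - 1/V) ≤ ∑ x ∈ W, D x * Real.log ((V:ℝ) * D x) :=
      Finset.sum_le_sum fun x _ => hgood x
    have hBle : ∑ x ∈ B, (D x - 1/V + 1/(8*V)) ≤ ∑ x ∈ B, D x * Real.log ((V:ℝ) * D x) :=
      Finset.sum_le_sum hbad
    have hBsum : ∑ x ∈ B, (D x - 1/V + 1/(8*V))
        = ∑ x ∈ B, (D x - 1/V) + (B.card : ℝ) / (8*V) := by
      rw [Finset.sum_add_distrib, Finset.sum_const, nsmul_eq_mul]
      ring
    have htot : ∑ x ∈ W, (D x - 1/V) + ∑ x ∈ B, (D x - 1/V) = 0 := by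
      have : ∑ x, (D x - 1/(V:ℝ)) = 0 := by
        rw [Finset.sum_sub_distrib, hD1, Finset.sum_const, Finset.card_univ, hcard,
          nsmul_eq_mul]
        field_simp
        ring
      rw [hW, hB, Finset.sum_filter_add_sum_filter_not, this]
    rw [hsplit2]
    linarith
  -- finish
  have hfinal : (B.card : ℝ) / (8*V) ≤ Real.log 2 / 18 := by
    rw [hsplit] at hlower
    linarith
  have hlog2 : Real.log 2 < 0.75 := by
    have := Real.log_two_lt_d9
    linarith
  have hBle : (B.card : ℝ) ≤ V / 3 := by
    rw [div_le_div_iff₀ (by positivity) (by norm_num : (0:ℝ) < 18)] at hfinal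
    nlinarith
  linarith
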